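/- Assume the nozzle geometry and the 2D CGO function, with s·ε ≤ 1, and let [T₁, T₂] ⊆ [0, T] with T₂ − T₁ = ε². Let α₁, α₄ ∈ (0, 1) and C₁, C₄ > 0. Let H : ℂ → ℂ satisfy |H(z) − H(z′)| ≤ C₁|z − z′|^{α₁} for all z, z′; let u, v : D̄_ε × [T₁, T₂] → ℂ satisfy |u(x,t) − u(x₀,t₀)| ≤ C₄(‖x − x₀‖ + |t − t₀|^{1/2}) and |v(x,t) − v(x₀,t₀)| ≤ C₄(‖x − x₀‖ + |t − t₀|^{1/2}) for all pairs of points; and suppose u((0,0), t₀) = v((0,0), t₀) for some t₀ ∈ [T₁, T₂]. Write w = u − v. Then there exists a constant C > 0 depending only on μ, λ, T, C₁, C₄ such that |λ·∫_{T₁}^{T₂}∫_{D_ε} ( w(x,t) − (H(u(x,t)) − H(v(x,t))) )·u₀(x,t) dx dt| ≤ C·ε^{2+l+α₁α₄ l₀}. -/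

import Mathlib

noncomputable section

/-- Partial derivative in the first spatial variable. -/
def pd1 (f : ℝ → ℝ → ℝ → ℂ) (x₁ x₂ t : ℝ) : ℂ := deriv (fun y => f y x₂ t) x₁

/-- Partial derivative in the second spatial variable. -/
def pd2 (f : ℝ → ℝ → ℝ → ℂ) (x₁ x₂ t : ℝ) : ℂ := deriv (fun y => f x₁ y t) x₂

/-- Partial derivative in time. -/
def pdt (f : ℝ → ℝ → ℝ → ℂ) (x₁ x₂ t : ℝ) : ℂ := deriv (fun τ => f x₁ x₂ τ) t

/-- Spatial Laplacian `Δ = ∂₁² + ∂₂²`. -/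
def lap (f : ℝ → ℝ → ℝ → ℂ) (x₁ x₂ t : ℝ) : ℂ :=
  pd1 (pd1 f) x₁ x₂ t + pd2 (pd2 f) x₁ x₂ t

/-- The 2D complex geometric optics function
`u₀(x,t) = exp(μ^{-1/2}((s d₁ + i√(s²+λ) d₂) x₁ + (s d₂ − i√(s²+λ) d₁) x₂) + λ t)`. -/
def cgo2 (μ lam s d₁ d₂ : ℝ) (x₁ x₂ t : ℝ) : ℂ :=
  Complex.exp (((Real.sqrt μ : ℝ) : ℂ)⁻¹ *
      (((s : ℂ) * (d₁ : ℂ) + Complex.I * ((Real.sqrt (s ^ 2 + lam) : ℝ) : ℂ) * (d₂ : ℂ)) *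
          (x₁ : ℂ) +
        ((s : ℂ) * (d₂ : ℂ) - Complex.I * ((Real.sqrt (s ^ 2 + lam) : ℝ) : ℂ) * (d₁ : ℂ)) *
          (x₂ : ℂ)) +
    (lam : ℂ) * (t : ℂ))

/-- The parabolic distance `ρ = ‖x − y‖ + |t − τ|^{1/2}` in two space dimensions. -/
def prho (x₁ x₂ t y₁ y₂ τ : ℝ) : ℝ :=
  Real.sqrt ((x₁ - y₁) ^ 2 + (x₂ - y₂) ^ 2) + Real.sqrt |t - τ|

/-- Euclidean norm of the spatial gradient of `w`. -/
def gradNorm (w : ℝ → ℝ → ℝ → ℂ) (x₁ x₂ t : ℝ) : ℝ :=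
  Real.sqrt (‖pd1 w x₁ x₂ t‖ ^ 2 + ‖pd2 w x₁ x₂ t‖ ^ 2)

/-- The closed nozzle space–time cylinder
`D̄_ε × [T₁,T₂]`, `D_ε = {0 ≤ x₁ ≤ ε^l, γ(x₁) ≤ x₂ ≤ γ(x₁)+ε}`. -/
def nozzleCyl (ε l T₁ T₂ : ℝ) (γ : ℝ → ℝ) : Set (ℝ × ℝ × ℝ) :=
  {p : ℝ × ℝ × ℝ | p.1 ∈ Set.Icc 0 (ε ^ l) ∧ p.2.1 ∈ Set.Icc (γ p.1) (γ p.1 + ε) ∧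
    p.2.2 ∈ Set.Icc T₁ T₂}

/-- Parabolic `C^{1,α}` bound with constant `C` on the set `S`. -/
structure ParabolicC1 (w : ℝ → ℝ → ℝ → ℂ) (S : Set (ℝ × ℝ × ℝ)) (C α : ℝ) : Prop where
  bdd : ∀ p ∈ S, ‖w p.1 p.2.1 p.2.2‖ ≤ C
  grad_bdd : ∀ p ∈ S, gradNorm w p.1 p.2.1 p.2.2 ≤ C
  time_bdd : ∀ p ∈ S, ‖pdt w p.1 p.2.1 p.2.2‖ ≤ C
  lip : ∀ p ∈ S, ∀ q ∈ S,
    ‖w p.1 p.2.1 p.2.2 - w q.1 q.2.1 q.2.2‖ ≤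
      C * prho p.1 p.2.1 p.2.2 q.1 q.2.1 q.2.2
  grad_holder : ∀ p ∈ S, ∀ q ∈ S,
    Real.sqrt (‖pd1 w p.1 p.2.1 p.2.2 - pd1 w q.1 q.2.1 q.2.2‖ ^ 2 +
        ‖pd2 w p.1 p.2.1 p.2.2 - pd2 w q.1 q.2.1 q.2.2‖ ^ 2) ≤
      C * prho p.1 p.2.1 p.2.2 q.1 q.2.1 q.2.2 ^ α
  taylor : ∀ p ∈ S, ∀ q ∈ S,
    ‖w p.1 p.2.1 p.2.2 - w q.1 q.2.1 q.2.2
        - pd1 w q.1 q.2.1 q.2.2 * ((p.1 - q.1 : ℝ) : ℂ)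
        - pd2 w q.1 q.2.1 q.2.2 * ((p.2.1 - q.2.1 : ℝ) : ℂ)
        - pdt w q.1 q.2.1 q.2.2 * ((p.2.2 - q.2.2 : ℝ) : ℂ)‖ ≤
      C * prho p.1 p.2.1 p.2.2 q.1 q.2.1 q.2.2 ^ (1 + α)

/-- `w` is (jointly) continuously differentiable in `(x,t)` on the set `S`. -/
structure SmoothC1 (w : ℝ → ℝ → ℝ → ℂ) (S : Set (ℝ × ℝ × ℝ)) : Prop where
  cont : ContinuousOn (fun p : ℝ × ℝ × ℝ => w p.1 p.2.1 p.2.2) S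
  jdiff : ∀ p ∈ S, DifferentiableAt ℝ (fun q : ℝ × ℝ × ℝ => w q.1 q.2.1 q.2.2) p
  cont1 : ContinuousOn (fun p : ℝ × ℝ × ℝ => pd1 w p.1 p.2.1 p.2.2) S
  cont2 : ContinuousOn (fun p : ℝ × ℝ × ℝ => pd2 w p.1 p.2.1 p.2.2) S
  contt : ContinuousOn (fun p : ℝ × ℝ × ℝ => pdt w p.1 p.2.1 p.2.2) S

set_option maxHeartbeats 1000000 in
/-- **Estimate for the term `I₆` (Lemma 3.8).**
If `H` is `α₁`-Hölder (constant `C₁`), `u, v` are parabolically Lipschitz (constant `C₄`)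
on `D̄_ε × [T₁,T₂]` and `u = v` at the base point `((0,0), t₀)`, then with `w = u − v`,
`|λ ∫_{T₁}^{T₂} ∫_{D_ε} (w − (H(u) − H(v))) u₀ dx dt| ≤ C ε^{2+l+α₁α₄l₀}`,
with `C` depending only on `μ, λ, T, C₁, C₄`. -/
theorem estimate_I6
    (μ lam T C₁ C₄ : ℝ) (hμ : 0 < μ) (hlam : 0 < lam) (hT : 0 < T)
    (hC₁ : 0 < C₁) (hC₄ : 0 < C₄) :
    ∃ C > 0, ∀ (ε l s d₁ d₂ T₁ T₂ α₁ α₄ t₀ : ℝ) (γ : ℝ → ℝ)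
      (H : ℂ → ℂ) (u v w : ℝ → ℝ → ℝ → ℂ),
      ε ∈ Set.Ioo (0:ℝ) 1 → 0 < l →
      ContDiffOn ℝ 2 γ (Set.Icc 0 (ε ^ l)) → γ 0 = 0 →
      derivWithin γ (Set.Icc 0 (ε ^ l)) 0 = 0 →
      (∀ x ∈ Set.Icc (0:ℝ) (ε ^ l), |γ x| ≤ ε) →
      d₁ < 0 → d₂ < 0 → d₁ ^ 2 + d₂ ^ 2 = 1 →
      0 < s → s * ε ≤ 1 →
      0 ≤ T₁ → T₂ ≤ T → T₂ - T₁ = ε ^ 2 →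
      α₁ ∈ Set.Ioo (0:ℝ) 1 → α₄ ∈ Set.Ioo (0:ℝ) 1 → t₀ ∈ Set.Icc T₁ T₂ →
      (∀ z z', ‖H z - H z'‖ ≤ C₁ * ‖z - z'‖ ^ α₁) →
      (∀ p ∈ nozzleCyl ε l T₁ T₂ γ, ∀ q ∈ nozzleCyl ε l T₁ T₂ γ,
        ‖u p.1 p.2.1 p.2.2 - u q.1 q.2.1 q.2.2‖
          ≤ C₄ * prho p.1 p.2.1 p.2.2 q.1 q.2.1 q.2.2) →
      (∀ p ∈ nozzleCyl ε l T₁ T₂ γ, ∀ q ∈ nozzleCyl ε l T₁ T₂ γ,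
        ‖v p.1 p.2.1 p.2.2 - v q.1 q.2.1 q.2.2‖
          ≤ C₄ * prho p.1 p.2.1 p.2.2 q.1 q.2.1 q.2.2) →
      u 0 0 t₀ = v 0 0 t₀ →
      (∀ x₁ x₂ t, w x₁ x₂ t = u x₁ x₂ t - v x₁ x₂ t) →
      ‖
          (lam : ℂ) * ∫ t in T₁..T₂, ∫ x₁ in (0:ℝ)..(ε ^ l), ∫ x₂ in (γ x₁)..(γ x₁ + ε),
            ((w x₁ x₂ t - (H (u x₁ x₂ t) - H (v x₁ x₂ t))) * cgo2 μ lam s d₁ d₂ x₁ x₂ t)‖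
        ≤ C * ε ^ (2 + l + α₁ * α₄ * min l 1) := by
  refine ⟨lam * ((8*C₄ + C₁*(1+8*C₄)) * Real.exp ((Real.sqrt μ)⁻¹ * 2 + lam * T)),
    by positivity, ?_⟩
  intro ε l s d₁ d₂ T₁ T₂ α₁ α₄ t₀ γ H u v w hε hl _hγ2 hγ0 _hγ'0 hγb hd₁ hd₂ hd hs hsε
    hT₁ hT₂ hTlen hα₁ hα₄ ht₀ hH hu hv huv hw
  obtain ⟨hε0, hε1⟩ := hε
  have hsqμ : 0 < Real.sqrt μ := Real.sqrt_pos.mpr hμ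
  set l₀ : ℝ := min l 1 with hl₀def
  set L : ℝ := α₁ * α₄ * l₀ with hLdef
  set M : ℝ := Real.exp ((Real.sqrt μ)⁻¹ * 2 + lam * T) with hMdef
  set K : ℝ := 8*C₄ + C₁*(1+8*C₄) with hKdef
  have hK0 : 0 < K := by positivity
  have hM0 : 0 < M := Real.exp_pos _
  have hεl : 0 < ε ^ l := Real.rpow_pos_of_pos hε0 l
  have hεL : 0 < ε ^ L := Real.rpow_pos_of_pos hε0 L
  have hεl₀pos : 0 < ε ^ l₀ := Real.rpow_pos_of_pos hε0 l₀
  have hl₀l : l₀ ≤ l := min_le_left _ _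
  have hl₀1 : l₀ ≤ 1 := min_le_right _ _
  have hl₀0 : 0 < l₀ := lt_min hl one_pos
  have hεll₀ : ε ^ l ≤ ε ^ l₀ := Real.rpow_le_rpow_of_exponent_ge hε0 hε1.le hl₀l
  have hε_l₀ : ε ≤ ε ^ l₀ := by
    nth_rewrite 1 [← Real.rpow_one ε]
    exact Real.rpow_le_rpow_of_exponent_ge hε0 hε1.le hl₀1
  have hLl₀ : L ≤ l₀ := by
    rw [hLdef]
    have h1 : α₁ * α₄ ≤ 1 := mul_le_one₀ hα₁.2.le hα₄.1.le hα₄.2.le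
    calc α₁ * α₄ * l₀ ≤ 1 * l₀ := mul_le_mul_of_nonneg_right h1 hl₀0.le
      _ = l₀ := one_mul _
  have hεl₀L : ε ^ l₀ ≤ ε ^ L := Real.rpow_le_rpow_of_exponent_ge hε0 hε1.le hLl₀
  set B : ℝ := K * ε ^ L * M with hBdef
  have hB0 : 0 ≤ B := by positivity
  have ht₀T : 0 ≤ T₁ ∧ T₁ ≤ T₂ := by
    refine ⟨hT₁, ?_⟩
    linarith only [hTlen, sq_nonneg ε]
  -- base point in cylinder
  have hp₀ : ((0:ℝ), (0:ℝ), t₀) ∈ nozzleCyl ε l T₁ T₂ γ := by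
    refine ⟨⟨le_refl 0, hεl.le⟩, ?_, ht₀⟩
    rw [hγ0]
    exact ⟨le_refl 0, by simpa using hε0.le⟩
  have hd₂abs : |d₂| ≤ 1 := by
    rw [← Real.sqrt_one, ← Real.sqrt_sq_eq_abs]
    exact Real.sqrt_le_sqrt (by linarith only [sq_nonneg d₁, hd])
  -- pointwise bound on the integrand
  have key : ∀ x₁ ∈ Set.Ioc (0:ℝ) (ε ^ l), ∀ x₂ ∈ Set.Ioc (γ x₁) (γ x₁ + ε),
      ∀ t ∈ Set.Ioc T₁ T₂,
      ‖(w x₁ x₂ t - (H (u x₁ x₂ t) - H (v x₁ x₂ t))) * cgo2 μ lam s d₁ d₂ x₁ x₂ t‖ ≤ B := by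
    intro x₁ hx₁ x₂ hx₂ t ht
    have hx₁' : x₁ ∈ Set.Icc (0:ℝ) (ε ^ l) := ⟨hx₁.1.le, hx₁.2⟩
    have hγx : |γ x₁| ≤ ε := hγb x₁ hx₁'
    have hp : ((x₁, x₂, t)) ∈ nozzleCyl ε l T₁ T₂ γ :=
      ⟨hx₁', ⟨hx₂.1.le, hx₂.2⟩, ⟨ht.1.le, ht.2⟩⟩
    have hx₂abs : |x₂| ≤ 2 * ε := by
      rw [abs_le]
      constructor
      · have h := abs_le.mp hγx; linarith only [h.1, hx₂.1, hε0]
      · have h := abs_le.mp hγx; linarith only [h.2, hx₂.2]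
    -- bound prho
    have hρ0 : 0 ≤ prho x₁ x₂ t 0 0 t₀ := by
      unfold prho; positivity
    have hρ : prho x₁ x₂ t 0 0 t₀ ≤ 4 * ε ^ l₀ := by
      unfold prho
      have h1 : Real.sqrt ((x₁ - 0) ^ 2 + (x₂ - 0) ^ 2) ≤ |x₁| + |x₂| := by
        have hle : (x₁ - 0) ^ 2 + (x₂ - 0) ^ 2 ≤ (|x₁| + |x₂|) ^ 2 := by
          have := abs_nonneg x₁; have := abs_nonneg x₂
          linarith only [mul_nonneg (abs_nonneg x₁) (abs_nonneg x₂), sq_abs x₁, sq_abs x₂]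
        calc Real.sqrt ((x₁ - 0) ^ 2 + (x₂ - 0) ^ 2) ≤ Real.sqrt ((|x₁| + |x₂|) ^ 2) :=
              Real.sqrt_le_sqrt hle
          _ = |x₁| + |x₂| := Real.sqrt_sq (by positivity)
      have hx₁abs : |x₁| ≤ ε ^ l₀ := by
        rw [abs_of_nonneg hx₁.1.le]; exact le_trans hx₁.2 hεll₀
      have h2 : Real.sqrt |t - t₀| ≤ ε ^ l₀ := by
        have htt : |t - t₀| ≤ ε ^ 2 := by
          rw [abs_le]
          constructor
          · linarith only [ht₀.2, ht.1, hTlen]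
          · linarith only [ht₀.1, ht.2, hTlen]
        calc Real.sqrt |t - t₀| ≤ Real.sqrt (ε ^ 2) := Real.sqrt_le_sqrt htt
          _ = ε := Real.sqrt_sq hε0.le
          _ ≤ ε ^ l₀ := hε_l₀
      have hx2 : |x₂| ≤ 2 * ε ^ l₀ := le_trans hx₂abs (by linarith only [hε_l₀])
      linarith only [h1, h2, hx₁abs, hx2]
    -- bound w
    have hwbd : ‖w x₁ x₂ t‖ ≤ 2 * C₄ * prho x₁ x₂ t 0 0 t₀ := by
      have h1 := hu (x₁, x₂, t) hp ((0:ℝ), (0:ℝ), t₀) hp₀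
      have h2 := hv (x₁, x₂, t) hp ((0:ℝ), (0:ℝ), t₀) hp₀
      simp only at h1 h2
      have heq : w x₁ x₂ t = (u x₁ x₂ t - u 0 0 t₀) - (v x₁ x₂ t - v 0 0 t₀) := by
        rw [hw, huv]; ring
      rw [heq]
      calc ‖(u x₁ x₂ t - u 0 0 t₀) - (v x₁ x₂ t - v 0 0 t₀)‖
          _ ≤ ‖u x₁ x₂ t - u 0 0 t₀‖ + ‖v x₁ x₂ t - v 0 0 t₀‖ := by
            exact norm_sub_le _ _
          _ ≤ C₄ * prho x₁ x₂ t 0 0 t₀ + C₄ * prho x₁ x₂ t 0 0 t₀ := add_le_add h1 h2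
          _ = 2 * C₄ * prho x₁ x₂ t 0 0 t₀ := by ring
    have hw8 : ‖w x₁ x₂ t‖ ≤ 8 * C₄ * ε ^ l₀ := by
      calc ‖w x₁ x₂ t‖ ≤ 2 * C₄ * prho x₁ x₂ t 0 0 t₀ := hwbd
        _ ≤ 2 * C₄ * (4 * ε ^ l₀) := mul_le_mul_of_nonneg_left hρ (by positivity)
        _ = 8 * C₄ * ε ^ l₀ := by ring
    -- bound H(u)-H(v)
    have hHbd : ‖H (u x₁ x₂ t) - H (v x₁ x₂ t)‖ ≤ C₁ * (1 + 8*C₄) * ε ^ L := by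
      have h1 : ‖u x₁ x₂ t - v x₁ x₂ t‖ ≤ 8 * C₄ * ε ^ l₀ := by
        rw [← hw]; exact hw8
      calc ‖H (u x₁ x₂ t) - H (v x₁ x₂ t)‖
          _ ≤ C₁ * ‖u x₁ x₂ t - v x₁ x₂ t‖ ^ α₁ := hH _ _
          _ ≤ C₁ * (8 * C₄ * ε ^ l₀) ^ α₁ :=
              mul_le_mul_of_nonneg_left
                (Real.rpow_le_rpow (norm_nonneg _) h1 hα₁.1.le) hC₁.le
          _ = (8 * C₄) ^ α₁ * (ε ^ l₀) ^ α₁ * C₁ := by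
              rw [Real.mul_rpow (by positivity) (by positivity)]; ring
          _ ≤ (1 + 8*C₄) * ε ^ L * C₁ := by
              have hb1 : (8 * C₄ : ℝ) ^ α₁ ≤ 1 + 8 * C₄ := by
                rcases le_total (8 * C₄ : ℝ) 1 with h | h
                · have := Real.rpow_le_one (by positivity) h hα₁.1.le
                  linarith
                · have := Real.rpow_le_rpow_of_exponent_le h hα₁.2.le
                  rw [Real.rpow_one] at this
                  linarith
              have hb2 : (ε ^ l₀) ^ α₁ ≤ ε ^ L := by
                rw [← Real.rpow_mul hε0.le]
                refine Real.rpow_le_rpow_of_exponent_ge hε0 hε1.le ?_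
                rw [hLdef]
                calc α₁ * α₄ * l₀ = α₁ * l₀ * α₄ := by ring
                  _ ≤ α₁ * l₀ * 1 := mul_le_mul_of_nonneg_left hα₄.2.le
                      (mul_nonneg hα₁.1.le hl₀0.le)
                  _ = l₀ * α₁ := by ring
              have h2 : (0:ℝ) ≤ (ε ^ l₀) ^ α₁ := by positivity
              have hmm := mul_le_mul hb1 hb2 h2 (by positivity : (0:ℝ) ≤ 1 + 8*C₄)
              exact mul_le_mul_of_nonneg_right hmm hC₁.le
          _ = C₁ * (1 + 8*C₄) * ε ^ L := by ring
    -- bound cgo2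
    have hcgo : ‖cgo2 μ lam s d₁ d₂ x₁ x₂ t‖ ≤ M := by
      unfold cgo2
      rw [Complex.norm_exp]
      rw [hMdef]
      apply Real.exp_le_exp.mpr
      have harg : ((((Real.sqrt μ : ℝ) : ℂ))⁻¹ *
          (((s : ℂ) * (d₁ : ℂ) + Complex.I * ((Real.sqrt (s ^ 2 + lam) : ℝ) : ℂ) * (d₂ : ℂ)) *
              (x₁ : ℂ) +
            ((s : ℂ) * (d₂ : ℂ) - Complex.I * ((Real.sqrt (s ^ 2 + lam) : ℝ) : ℂ) * (d₁ : ℂ)) *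
              (x₂ : ℂ)) +
          (lam : ℂ) * (t : ℂ)) =
          Complex.ofReal ((Real.sqrt μ)⁻¹ * (s * d₁ * x₁ + s * d₂ * x₂) + lam * t) +
          Complex.I * Complex.ofReal
            ((Real.sqrt μ)⁻¹ * Real.sqrt (s ^ 2 + lam) * (d₂ * x₁ - d₁ * x₂)) := by
        push_cast
        ring
      rw [harg]
      simp only [Complex.add_re, Complex.ofReal_re, Complex.mul_re, Complex.I_re,
        Complex.I_im, Complex.ofReal_im]
      ring_nf
      have h1 : s * d₁ * x₁ ≤ 0 := by
        have h := mul_nonneg (mul_nonneg hs.le (neg_nonneg.mpr hd₁.le)) hx₁.1.le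
        linarith only [h]
      have h2 : s * d₂ * x₂ ≤ 2 := by
        calc s * d₂ * x₂ ≤ |s * d₂ * x₂| := le_abs_self _
          _ = |s| * |d₂| * |x₂| := by rw [abs_mul, abs_mul]
          _ ≤ s * 1 * (2 * ε) := by
              rw [abs_of_pos hs]
              exact mul_le_mul (mul_le_mul_of_nonneg_left hd₂abs hs.le) hx₂abs
                (abs_nonneg _) (by linarith only [hs])
          _ = 2 * (s * ε) := by ring
          _ ≤ 2 := by linarith only [hsε]
      have h3 : lam * t ≤ lam * T :=
        mul_le_mul_of_nonneg_left (le_trans ht.2 hT₂) hlam.le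
      have hinv : (0:ℝ) ≤ (Real.sqrt μ)⁻¹ := by positivity
      have h4 : (Real.sqrt μ)⁻¹ * (s * d₁ * x₁ + s * d₂ * x₂) ≤ (Real.sqrt μ)⁻¹ * 2 :=
        mul_le_mul_of_nonneg_left (by linarith only [h1, h2]) hinv
      linarith only [h3, h4]
    -- combine
    rw [norm_mul, hBdef]
    have hf : ‖w x₁ x₂ t - (H (u x₁ x₂ t) - H (v x₁ x₂ t))‖ ≤ K * ε ^ L := by
      calc ‖w x₁ x₂ t - (H (u x₁ x₂ t) - H (v x₁ x₂ t))‖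
          _ ≤ ‖w x₁ x₂ t‖ + ‖H (u x₁ x₂ t) - H (v x₁ x₂ t)‖ :=
            norm_sub_le _ _
          _ ≤ 8 * C₄ * ε ^ l₀ + C₁ * (1 + 8*C₄) * ε ^ L := add_le_add hw8 hHbd
          _ ≤ 8 * C₄ * ε ^ L + C₁ * (1 + 8*C₄) * ε ^ L :=
              add_le_add (mul_le_mul_of_nonneg_left hεl₀L (by positivity)) le_rfl
          _ = K * ε ^ L := by rw [hKdef]; ring
    exact mul_le_mul hf hcgo (norm_nonneg _) (by positivity)
  -- integrate
  have step_x₂ : ∀ t ∈ Set.Ioc T₁ T₂, ∀ x₁ ∈ Set.Ioc (0:ℝ) (ε ^ l),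
      ‖∫ x₂ in (γ x₁)..(γ x₁ + ε),
        (w x₁ x₂ t - (H (u x₁ x₂ t) - H (v x₁ x₂ t))) * cgo2 μ lam s d₁ d₂ x₁ x₂ t‖ ≤ B * ε := by
    intro t ht x₁ hx₁
    have h := intervalIntegral.norm_integral_le_of_norm_le_const (C := B)
      (f := fun x₂ => (w x₁ x₂ t - (H (u x₁ x₂ t) - H (v x₁ x₂ t))) *
        cgo2 μ lam s d₁ d₂ x₁ x₂ t) (a := γ x₁) (b := γ x₁ + ε)
      (fun x₂ hx₂ => by
        rw [Set.uIoc_of_le (by linarith only [hε0] : γ x₁ ≤ γ x₁ + ε)] at hx₂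
        exact key x₁ hx₁ x₂ hx₂ t ht)
    have heq : B * |γ x₁ + ε - γ x₁| = B * ε := by
      rw [add_sub_cancel_left, abs_of_pos hε0]
    exact le_trans h heq.le
  have step_x₁ : ∀ t ∈ Set.Ioc T₁ T₂,
      ‖∫ x₁ in (0:ℝ)..(ε ^ l), ∫ x₂ in (γ x₁)..(γ x₁ + ε),
        (w x₁ x₂ t - (H (u x₁ x₂ t) - H (v x₁ x₂ t))) * cgo2 μ lam s d₁ d₂ x₁ x₂ t‖ ≤
        B * ε * ε ^ l := by
    intro t ht
    have h := intervalIntegral.norm_integral_le_of_norm_le_const (C := B * ε)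
      (f := fun x₁ => ∫ x₂ in (γ x₁)..(γ x₁ + ε),
        (w x₁ x₂ t - (H (u x₁ x₂ t) - H (v x₁ x₂ t))) * cgo2 μ lam s d₁ d₂ x₁ x₂ t)
      (a := (0:ℝ)) (b := ε ^ l)
      (fun x₁ hx₁ => by
        rw [Set.uIoc_of_le hεl.le] at hx₁
        exact step_x₂ t ht x₁ hx₁)
    have heq : B * ε * |ε ^ l - 0| = B * ε * ε ^ l := by
      rw [sub_zero, abs_of_pos hεl]
    exact le_trans h heq.le
  have step_t :
      ‖∫ t in T₁..T₂, ∫ x₁ in (0:ℝ)..(ε ^ l), ∫ x₂ in (γ x₁)..(γ x₁ + ε),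
        (w x₁ x₂ t - (H (u x₁ x₂ t) - H (v x₁ x₂ t))) * cgo2 μ lam s d₁ d₂ x₁ x₂ t‖ ≤
        B * ε * ε ^ l * ε ^ 2 := by
    have h := intervalIntegral.norm_integral_le_of_norm_le_const (C := B * ε * ε ^ l)
      (f := fun t => ∫ x₁ in (0:ℝ)..(ε ^ l), ∫ x₂ in (γ x₁)..(γ x₁ + ε),
        (w x₁ x₂ t - (H (u x₁ x₂ t) - H (v x₁ x₂ t))) * cgo2 μ lam s d₁ d₂ x₁ x₂ t)
      (a := T₁) (b := T₂)
      (fun t ht => by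
        rw [Set.uIoc_of_le ht₀T.2] at ht
        exact step_x₁ t ht)
    have heq : B * ε * ε ^ l * |T₂ - T₁| = B * ε * ε ^ l * ε ^ 2 := by
      rw [hTlen, abs_of_pos (by positivity)]
    exact le_trans h heq.le
  -- final assembly
  have hpow : ε ^ L * ε * ε ^ l * ε ^ 2 = ε ^ (2 + l + L) * ε := by
    rw [Real.rpow_add hε0, Real.rpow_add hε0,
      show (2:ℝ) = ((2:ℕ):ℝ) by norm_num, Real.rpow_natCast]
    ring
  calc ‖(lam : ℂ) * ∫ t in T₁..T₂, ∫ x₁ in (0:ℝ)..(ε ^ l),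
        ∫ x₂ in (γ x₁)..(γ x₁ + ε),
        (w x₁ x₂ t - (H (u x₁ x₂ t) - H (v x₁ x₂ t))) * cgo2 μ lam s d₁ d₂ x₁ x₂ t‖
      _ = lam * ‖∫ t in T₁..T₂, ∫ x₁ in (0:ℝ)..(ε ^ l), ∫ x₂ in (γ x₁)..(γ x₁ + ε),
        (w x₁ x₂ t - (H (u x₁ x₂ t) - H (v x₁ x₂ t))) * cgo2 μ lam s d₁ d₂ x₁ x₂ t‖ := by
        rw [norm_mul, Complex.norm_real, Real.norm_eq_abs, abs_of_pos hlam]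
      _ ≤ lam * (B * ε * ε ^ l * ε ^ 2) := mul_le_mul_of_nonneg_left step_t hlam.le
      _ = lam * (K * M) * (ε ^ L * ε * ε ^ l * ε ^ 2) := by rw [hBdef]; ring
      _ = lam * (K * M) * (ε ^ (2 + l + L) * ε) := by rw [hpow]
      _ ≤ lam * (K * M) * (ε ^ (2 + l + L) * 1) := by
          refine mul_le_mul_of_nonneg_left ?_ (by positivity)
          exact mul_le_mul_of_nonneg_left hε1.le (by positivity)
      _ = lam * (K * M) * ε ^ (2 + l + L) := by ring
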